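/- arXiv:2409.14641 — 3 statements merged into one kernel-verified Lean document; each statement's English description precedes it below -/
import Mathlib

section
/- Let m ≥ 1 and k ≥ 0 be integers. The composition operator C on L²(μ) is k-quasi-m-isometric if and only if ∑_{j=0}^{m} (−1)^j binom(m,j) h_{n+k+j}(x) = 0 for every x ∈ X and every n ∈ ℤ₊. -/
open MeasureTheory Finset
open scoped ENNReal NNReal

noncomputable section

/-- `B_m(T) = ∑_{j=0}^m (-1)^j C(m,j) T*^{m-j} T^{m-j}`. -/
def BmOp {H : Type*} [NormedAddCommGroup H] [InnerProductSpace ℂ H] [CompleteSpace H]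
    (m : ℕ) (T : H →L[ℂ] H) : H →L[ℂ] H :=
  ∑ j ∈ Finset.range (m + 1), ((-1 : ℂ) ^ j * (m.choose j : ℂ)) •
    ((ContinuousLinearMap.adjoint T) ^ (m - j) * T ^ (m - j))

/-- `T` is a `k`-quasi-`m`-isometry, i.e. `T*^k B_m(T) T^k = 0`. -/
def IsQuasiIso {H : Type*} [NormedAddCommGroup H] [InnerProductSpace ℂ H] [CompleteSpace H]
    (k m : ℕ) (T : H →L[ℂ] H) : Prop :=
  (ContinuousLinearMap.adjoint T) ^ k * BmOp m T * T ^ k = 0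

/-- The Radon–Nikodym derivative `h_p` of `μ ∘ φ^{-p}` with respect to `μ` in the discrete
setting: `h_p(x) = μ(φ^{-p}({x}))/μ({x})`. -/
def hRN {X : Type*} [MeasurableSpace X] (μ : Measure X) (φ : X → X) (p : ℕ) (x : X) : ℝ :=
  (μ ((φ^[p]) ⁻¹' {x})).toReal / (μ {x}).toReal

lemma adjoint_pow_eq {H : Type*} [NormedAddCommGroup H] [InnerProductSpace ℂ H]
    [CompleteSpace H] (T : H →L[ℂ] H) (p : ℕ) :
    (ContinuousLinearMap.adjoint T) ^ p = ContinuousLinearMap.adjoint (T ^ p) := by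
  rw [← ContinuousLinearMap.star_eq_adjoint, ← ContinuousLinearMap.star_eq_adjoint, star_pow]

lemma inner_expand {H : Type*} [NormedAddCommGroup H] [InnerProductSpace ℂ H]
    [CompleteSpace H] (m k : ℕ) (T : H →L[ℂ] H) (f : H) :
    (inner ℂ (((ContinuousLinearMap.adjoint T) ^ k * BmOp m T * T ^ k) f) f : ℂ) =
      ∑ j ∈ Finset.range (m + 1), ((-1 : ℂ) ^ j * (m.choose j : ℂ)) *
        (inner ℂ ((T ^ (m - j + k)) f) ((T ^ (m - j + k)) f) : ℂ) := by
  simp only [ContinuousLinearMap.mul_apply]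
  rw [adjoint_pow_eq, ContinuousLinearMap.adjoint_inner_left]
  simp only [BmOp, ContinuousLinearMap.sum_apply, ContinuousLinearMap.smul_apply,
    ContinuousLinearMap.mul_apply]
  rw [sum_inner]
  refine Finset.sum_congr rfl fun j hj => ?_
  rw [inner_smul_left, adjoint_pow_eq, ContinuousLinearMap.adjoint_inner_left,
    ← ContinuousLinearMap.mul_apply, ← pow_add]
  congr 1
  simp

lemma sum_reflect_sign (m : ℕ) (w : ℕ → ℝ) :
    ∑ j ∈ Finset.range (m + 1), (-1 : ℝ) ^ j * (m.choose j : ℝ) * w (m - j) =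
      (-1 : ℝ) ^ m * ∑ j ∈ Finset.range (m + 1), (-1 : ℝ) ^ j * (m.choose j : ℝ) * w j := by
  rw [Finset.mul_sum,
    ← Finset.sum_range_reflect (fun j => (-1:ℝ)^j * (m.choose j : ℝ) * w (m-j)) (m+1)]
  refine Finset.sum_congr rfl fun j hj => ?_
  have hj' : j ≤ m := Nat.lt_succ_iff.mp (Finset.mem_range.mp hj)
  have h1 : m + 1 - 1 - j = m - j := by omega
  simp only [h1, Nat.choose_symm hj', Nat.sub_sub_self hj']
  have h2 : (-1:ℝ)^(m-j) * (-1:ℝ)^j = (-1:ℝ)^m := by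
    rw [← pow_add, Nat.sub_add_cancel hj']
  have h3 : (-1:ℝ)^j * (-1:ℝ)^j = 1 := by
    rw [← pow_add]; exact Even.neg_one_pow ⟨j, rfl⟩
  linear_combination ((m.choose j : ℝ) * w j) * ((-1:ℝ)^j * h2 - (-1:ℝ)^(m-j) * h3)

theorem stmt1
    (X : Type*) [MeasurableSpace X] [Countable X] [Infinite X]
    (hmeas : ∀ s : Set X, MeasurableSet s)
    (φ : X → X)
    (μ : Measure X) [SigmaFinite μ]
    (hμ : ∀ x : X, 0 < μ {x} ∧ μ {x} < ⊤)
    (hns : μ.map φ ≪ μ)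
    (C : Lp ℂ 2 μ →L[ℂ] Lp ℂ 2 μ)
    (hC : ∀ f : Lp ℂ 2 μ, (C f : X → ℂ) =ᵐ[μ] fun x => f (φ x))
    (m k : ℕ) (hm : 1 ≤ m) :
    IsQuasiIso k m C ↔
      ∀ (x : X) (n : ℕ),
        ∑ j ∈ Finset.range (m + 1),
          (-1 : ℝ) ^ j * (m.choose j : ℝ) * hRN μ φ (n + k + j) x = 0 := by
  classical
  haveI : MeasurableSingletonClass X := ⟨fun x => hmeas _⟩
  have hμt : ∀ y : X, (μ {y}).toReal ≠ 0 :=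
    fun y => (ENNReal.toReal_pos (hμ y).1.ne' (hμ y).2.ne).ne'
  -- a.e. equality upgrades to everywhere equality
  have haefun : ∀ {g h : X → ℂ}, g =ᵐ[μ] h → ∀ x, g x = h x := by
    intro g h H x
    by_contra hx
    have h0 : μ {y | ¬ g y = h y} = 0 := by
      have := H
      rwa [Filter.EventuallyEq, MeasureTheory.ae_iff] at this
    have hle : μ {x} ≤ μ {y | ¬ g y = h y} :=
      measure_mono (Set.singleton_subset_iff.mpr hx)
    exact (hμ x).1.ne' (le_antisymm (h0 ▸ hle) zero_le)
  -- pointwise formula for powers of C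
  have hCpow : ∀ (p : ℕ) (f : Lp ℂ 2 μ) (x : X), ((C ^ p) f : X → ℂ) x = f (φ^[p] x) := by
    intro p
    induction p with
    | zero => intro f x; simp
    | succ p ih =>
      intro f x
      rw [pow_succ, ContinuousLinearMap.mul_apply, ih (C f) x, haefun (hC f) (φ^[p] x)]
      simp [Function.iterate_succ_apply']
  -- the scalar key lemma
  have key : ∀ (f : Lp ℂ 2 μ) (p : ℕ),
      Summable (fun y => ‖(f : X → ℂ) y‖^2 * (μ ((φ^[p]) ⁻¹' {y})).toReal) ∧
      (inner ℂ ((C ^ p) f) ((C ^ p) f) : ℂ) =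
        ((∑' y, ‖(f : X → ℂ) y‖^2 * (μ ((φ^[p]) ⁻¹' {y})).toReal : ℝ) : ℂ) := by
    intro f p
    set g := (C ^ p) f with hg
    have hgfun : ∀ x, (g : X → ℂ) x = f (φ^[p] x) := hCpow p f
    have mφ : Measurable (φ^[p]) := fun t _ => hmeas _
    have hsm : AEStronglyMeasurable (fun y => ‖(f : X → ℂ) y‖^2) (μ.map (φ^[p])) :=
      (Measurable.stronglyMeasurable (fun t _ => hmeas _)).aestronglyMeasurable
    have hint : Integrable (fun x => ‖(g : X → ℂ) x‖^2) μ :=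
      (memLp_two_iff_integrable_sq_norm (Lp.aestronglyMeasurable g)).mp (Lp.memLp g)
    have hcomp : (fun x => ‖(f : X → ℂ) (φ^[p] x)‖^2) = fun x => ‖(g : X → ℂ) x‖^2 := by
      funext x; rw [hgfun]
    have hintm : Integrable (fun y => ‖(f : X → ℂ) y‖^2) (μ.map (φ^[p])) := by
      rw [integrable_map_measure hsm mφ.aemeasurable]
      show Integrable (fun x => ‖(f : X → ℂ) (φ^[p] x)‖^2) μ
      rw [hcomp]; exact hint
    have hmap : ∀ y : X, (μ.map (φ^[p])) {y} = μ ((φ^[p]) ⁻¹' {y}) :=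
      fun y => Measure.map_apply mφ (hmeas _)
    have hI : ∫ x, ‖(g : X → ℂ) x‖^2 ∂μ
        = ∑' y, ‖(f : X → ℂ) y‖^2 * (μ ((φ^[p]) ⁻¹' {y})).toReal := by
      rw [← hcomp, ← integral_map mφ.aemeasurable hsm, integral_countable' hintm]
      exact tsum_congr fun y => by rw [measureReal_def, hmap, smul_eq_mul, mul_comm]
    constructor
    · have hfin : ∑' (y : X), ((nnnorm (‖(f : X → ℂ) y‖ ^ 2) : ℝ≥0∞) * (μ.map (φ^[p])) {y}) ≠ ⊤ := by
        rw [← lintegral_countable']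
        exact ne_of_lt hintm.2
      refine (ENNReal.summable_toReal hfin).congr fun y => ?_
      rw [ENNReal.toReal_mul, hmap]
      congr 1
      simp [Real.norm_of_nonneg (sq_nonneg _)]
    · have h1 : (inner ℂ g g : ℂ) = ∫ a, ((‖(g : X → ℂ) a‖^2 : ℝ) : ℂ) ∂μ := by
        rw [L2.inner_def]
        refine integral_congr_ae (Filter.Eventually.of_forall fun a => ?_)
        show (inner ℂ ((g : X → ℂ) a) ((g : X → ℂ) a) : ℂ) = ((‖(g : X → ℂ) a‖^2 : ℝ) : ℂ)
        rw [RCLike.inner_apply, RCLike.mul_conj]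
        norm_cast
      rw [h1, ← hI]
      exact integral_ofReal
  -- indicator elements
  have hx2 : ∀ x : X, μ {x} ≠ ⊤ := fun x => (hμ x).2.ne
  set e : X → Lp ℂ 2 μ :=
    fun x => (memLp_indicator_const 2 (hmeas {x}) (1 : ℂ) (Or.inr (hx2 x))).toLp _ with he
  have he_val : ∀ x y, ((e x : X → ℂ)) y = Set.indicator {x} (fun _ => (1 : ℂ)) y :=
    fun x => haefun (MemLp.coeFn_toLp _)
  have hW : ∀ (p : ℕ) (x : X),
      (∑' y, ‖(e x : X → ℂ) y‖^2 * (μ ((φ^[p]) ⁻¹' {y})).toReal)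
        = (μ ((φ^[p]) ⁻¹' {x})).toReal := by
    intro p x
    rw [tsum_eq_single x ?_]
    · rw [he_val]; simp
    · intro y hy
      rw [he_val, Set.indicator_of_notMem (by simpa using hy)]
      simp
  constructor
  · -- forward
    intro hQ x n
    have hQ' : (ContinuousLinearMap.adjoint C) ^ k * BmOp m C * C ^ k = 0 := hQ
    have hzero : (inner ℂ (((ContinuousLinearMap.adjoint C) ^ k * BmOp m C * C ^ k)
        ((C ^ n) (e x))) ((C ^ n) (e x)) : ℂ) = 0 := by
      rw [hQ']; simp
    rw [inner_expand] at hzero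
    have heq : ∀ j ∈ Finset.range (m + 1),
        ((-1 : ℂ) ^ j * (m.choose j : ℂ)) *
          (inner ℂ ((C ^ (m - j + k)) ((C ^ n) (e x))) ((C ^ (m - j + k)) ((C ^ n) (e x))) : ℂ)
        = (((-1 : ℝ) ^ j * (m.choose j : ℝ) *
            (μ ((φ^[n + k + (m - j)]) ⁻¹' {x})).toReal : ℝ) : ℂ) := by
      intro j hj
      have hidx : m - j + k + n = n + k + (m - j) := by omega
      have hpow : (C ^ (m - j + k)) ((C ^ n) (e x)) = (C ^ (n + k + (m - j))) (e x) := by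
        rw [← ContinuousLinearMap.mul_apply, ← pow_add, hidx]
      rw [hpow, (key (e x) (n + k + (m - j))).2, hW]
      push_cast
      ring
    rw [Finset.sum_congr rfl heq, ← Complex.ofReal_sum] at hzero
    have hre : ∑ j ∈ Finset.range (m + 1),
        (-1 : ℝ) ^ j * (m.choose j : ℝ) * (μ ((φ^[n + k + (m - j)]) ⁻¹' {x})).toReal = 0 := by
      exact_mod_cast hzero
    have hrefl := sum_reflect_sign m (fun i => (μ ((φ^[n + k + i]) ⁻¹' {x})).toReal)
    have hB : ∑ j ∈ Finset.range (m + 1),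
        (-1 : ℝ) ^ j * (m.choose j : ℝ) * (μ ((φ^[n + k + j]) ⁻¹' {x})).toReal = 0 := by
      have hm0 : ((-1 : ℝ) ^ m) ≠ 0 := pow_ne_zero _ (by norm_num)
      have h4 : (-1 : ℝ) ^ m * ∑ j ∈ Finset.range (m + 1),
          (-1 : ℝ) ^ j * (m.choose j : ℝ) * (μ ((φ^[n + k + j]) ⁻¹' {x})).toReal = 0 := by
        rw [← hrefl]; exact hre
      exact (mul_eq_zero.mp h4).resolve_left hm0
    have hfin : (∑ j ∈ Finset.range (m + 1),
        (-1 : ℝ) ^ j * (m.choose j : ℝ) * hRN μ φ (n + k + j) x) * (μ {x}).toReal = 0 := by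
      rw [Finset.sum_mul]
      refine Eq.trans (Finset.sum_congr rfl fun j _ => ?_) hB
      rw [hRN, mul_assoc, div_mul_cancel₀ _ (hμt x)]
    exact (mul_eq_zero.mp hfin).resolve_right (hμt x)
  · -- backward
    intro hR
    have h0 : ∀ f : Lp ℂ 2 μ,
        (inner ℂ ((((ContinuousLinearMap.adjoint C) ^ k * BmOp m C * C ^ k :
          Lp ℂ 2 μ →L[ℂ] Lp ℂ 2 μ) : Lp ℂ 2 μ →ₗ[ℂ] Lp ℂ 2 μ) f) f : ℂ) = 0 := by
      intro f
      show (inner ℂ (((ContinuousLinearMap.adjoint C) ^ k * BmOp m C * C ^ k) f) f : ℂ) = 0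
      rw [inner_expand]
      have hterm : ∀ j ∈ Finset.range (m + 1),
          ((-1 : ℂ) ^ j * (m.choose j : ℂ)) *
            (inner ℂ ((C ^ (m - j + k)) f) ((C ^ (m - j + k)) f) : ℂ)
          = (((-1 : ℝ) ^ j * (m.choose j : ℝ) *
              ∑' y, ‖(f : X → ℂ) y‖^2 * (μ ((φ^[m - j + k]) ⁻¹' {y})).toReal : ℝ) : ℂ) := by
        intro j _
        rw [(key f (m - j + k)).2]
        push_cast
        ring
      rw [Finset.sum_congr rfl hterm, ← Complex.ofReal_sum, Complex.ofReal_eq_zero]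
      have hsummable : ∀ j ∈ Finset.range (m + 1),
          Summable (fun y => (-1 : ℝ) ^ j * (m.choose j : ℝ) *
            (‖(f : X → ℂ) y‖^2 * (μ ((φ^[m - j + k]) ⁻¹' {y})).toReal)) :=
        fun j _ => ((key f (m - j + k)).1).mul_left _
      have step1 : ∑ j ∈ Finset.range (m + 1), (-1 : ℝ) ^ j * (m.choose j : ℝ) *
            (∑' y, ‖(f : X → ℂ) y‖^2 * (μ ((φ^[m - j + k]) ⁻¹' {y})).toReal)
          = ∑' y, ∑ j ∈ Finset.range (m + 1), (-1 : ℝ) ^ j * (m.choose j : ℝ) *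
            (‖(f : X → ℂ) y‖^2 * (μ ((φ^[m - j + k]) ⁻¹' {y})).toReal) := by
        rw [Summable.tsum_finsetSum hsummable]
        exact Finset.sum_congr rfl fun j _ => (tsum_mul_left).symm
      rw [step1]
      have hptwise : ∀ y, ∑ j ∈ Finset.range (m + 1), (-1 : ℝ) ^ j * (m.choose j : ℝ) *
          (‖(f : X → ℂ) y‖^2 * (μ ((φ^[m - j + k]) ⁻¹' {y})).toReal) = 0 := by
        intro y
        have hfac : ∑ j ∈ Finset.range (m + 1), (-1 : ℝ) ^ j * (m.choose j : ℝ) *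
            (‖(f : X → ℂ) y‖^2 * (μ ((φ^[m - j + k]) ⁻¹' {y})).toReal)
            = ‖(f : X → ℂ) y‖^2 * ∑ j ∈ Finset.range (m + 1), (-1 : ℝ) ^ j *
              (m.choose j : ℝ) * (μ ((φ^[m - j + k]) ⁻¹' {y})).toReal := by
          rw [Finset.mul_sum]
          exact Finset.sum_congr rfl fun j _ => by ring
        have hzero2 : ∑ j ∈ Finset.range (m + 1), (-1 : ℝ) ^ j * (m.choose j : ℝ) *
            (μ ((φ^[j + k]) ⁻¹' {y})).toReal = 0 := by
          have h2 : ∑ j ∈ Finset.range (m + 1), (-1 : ℝ) ^ j * (m.choose j : ℝ) *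
              (μ ((φ^[j + k]) ⁻¹' {y})).toReal
              = (∑ j ∈ Finset.range (m + 1), (-1 : ℝ) ^ j * (m.choose j : ℝ) *
                hRN μ φ (0 + k + j) y) * (μ {y}).toReal := by
            rw [Finset.sum_mul]
            refine Finset.sum_congr rfl fun j _ => ?_
            have hidx : (0 : ℕ) + k + j = j + k := by omega
            rw [hidx]
            simp only [hRN]
            field_simp
            rw [mul_div_cancel_right₀ _ (hμt y)]
          rw [h2, hR y 0, zero_mul]
        have hrefl := sum_reflect_sign m (fun i => (μ ((φ^[i + k]) ⁻¹' {y})).toReal)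
        rw [hfac, hrefl, hzero2, mul_zero, mul_zero]
      exact (tsum_congr hptwise).trans tsum_zero
    have h1 := (inner_map_self_eq_zero _).mp h0
    show (ContinuousLinearMap.adjoint C) ^ k * BmOp m C * C ^ k = 0
    exact ContinuousLinearMap.coe_injective (h1.trans (ContinuousLinearMap.coe_zero).symm)
end
end

section
/- Let m ≥ 1 and k ≥ 0 be integers. The composition operator C on L²(μ) is k-quasi-m-isometric if and only if for every x ∈ X the sequence (h_{n+k}(x))_{n∈ℤ₊} is a polynomial in n of degree at most m−1. -/
open MeasureTheory Finset

noncomputable section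

/-- A real sequence indexed by the nonnegative integers is a polynomial in `n` of degree
at most `d` if some real polynomial of degree at most `d` interpolates it. -/
def IsPolySeq (d : ℕ) (γ : ℕ → ℝ) : Prop :=
  ∃ q : Polynomial ℝ, q.natDegree ≤ d ∧ ∀ n : ℕ, q.eval (n : ℝ) = γ n

open Polynomial fwdDiff
open scoped ENNReal NNReal

lemma fwdDiff_eval_poly (q : Polynomial ℝ) (n : ℕ) :
    Δ_[1] (fun n : ℕ => q.eval (n : ℝ)) n = (q.comp (X + C 1) - q).eval (n : ℝ) := by
  simp only [fwdDiff, eval_sub, eval_comp, eval_add, eval_X, eval_C]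
  push_cast
  ring_nf

lemma natDegree_comp_sub (q : Polynomial ℝ) {d : ℕ} (hq : q.natDegree ≤ d + 1) :
    (q.comp (X + C 1) - q).natDegree ≤ d := by
  set p := q.comp (X + C 1) with hp
  rcases eq_or_ne (p - q) 0 with h0 | h0
  · simp [h0]
  have hXC : (X + C (1:ℝ)).natDegree = 1 := natDegree_X_add_C 1
  have hnp : p.natDegree = q.natDegree := by
    rw [hp, natDegree_comp, hXC, mul_one]
  rcases lt_or_eq_of_le hq with h | h
  · have : (p - q).natDegree ≤ d := by
      refine (natDegree_sub_le p q).trans ?_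
      simp [hnp]; omega
    exact this
  · have hq0 : q ≠ 0 := by
      intro hc; rw [hc] at h; simp at h
    have hlc : p.leadingCoeff = q.leadingCoeff := by
      rw [hp, leadingCoeff_comp (by rw [hXC]; norm_num),
        (monic_X_add_C (1:ℝ)).leadingCoeff, one_pow, mul_one]
    have hp0 : p ≠ 0 := by
      intro hc
      apply hq0
      rw [← leadingCoeff_eq_zero, ← hlc, hc, leadingCoeff_zero]
    have hdeg : p.degree = q.degree := by
      rw [degree_eq_natDegree hp0, degree_eq_natDegree hq0, hnp]
    have := degree_sub_lt hdeg hp0 hlc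
    rw [degree_eq_natDegree hp0, hnp, h] at this
    have h2 : (p - q).natDegree < d + 1 := by
      rwa [natDegree_lt_iff_degree_lt h0]
    omega

lemma fwdDiff_iter_eval_poly_zero : ∀ (d : ℕ) (q : Polynomial ℝ), q.natDegree ≤ d →
    ∀ n : ℕ, (Δ_[1])^[d+1] (fun n : ℕ => q.eval (n : ℝ)) n = 0 := by
  intro d
  induction d with
  | zero =>
    intro q hq n
    rw [eq_C_of_natDegree_le_zero hq]
    simp [fwdDiff]
  | succ d IH =>
    intro q hq n
    rw [Function.iterate_succ_apply]
    have : Δ_[1] (fun n : ℕ => q.eval (n : ℝ))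
        = fun n : ℕ => (q.comp (X + C 1) - q).eval (n : ℝ) := by
      funext n; exact fwdDiff_eval_poly q n
    rw [this]
    exact IH _ (natDegree_comp_sub q hq) n

lemma fwdDiff_iter_zero_fun (a : ℕ) : (Δ_[1])^[a] (fun _ : ℕ => (0:ℝ)) = fun _ => 0 := by
  induction a with
  | zero => rfl
  | succ a IH => rw [Function.iterate_succ_apply, fwdDiff_const, IH]

/-- main discrete-calculus lemma -/
lemma isPolySeq_iff_fwdDiff (m : ℕ) (hm : 1 ≤ m) (γ : ℕ → ℝ) :
    IsPolySeq (m - 1) γ ↔ ∀ n, (Δ_[1])^[m] γ n = 0 := by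
  constructor
  · rintro ⟨q, hq, hqe⟩ n
    have : γ = fun n : ℕ => q.eval (n : ℝ) := by funext j; exact (hqe j).symm
    rw [this]
    obtain ⟨d, rfl⟩ : ∃ d, m = d + 1 := ⟨m - 1, by omega⟩
    exact fwdDiff_iter_eval_poly_zero d q (by simpa using hq) n
  · intro hΔ
    have hΔ' : (Δ_[1])^[m] γ = fun _ => 0 := funext hΔ
    have hvanish : ∀ i, m ≤ i → (Δ_[1])^[i] γ 0 = 0 := by
      intro i hi
      obtain ⟨a, rfl⟩ : ∃ a, i = a + m := ⟨i - m, by omega⟩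
      rw [Function.iterate_add_apply, hΔ', fwdDiff_iter_zero_fun]
    refine ⟨∑ i ∈ range m, C ((Δ_[1])^[i] γ 0 / i.factorial) * descPochhammer ℝ i, ?_, ?_⟩
    · refine natDegree_sum_le_of_forall_le _ _ fun i hi => ?_
      refine (natDegree_C_mul_le _ _).trans ?_
      rw [descPochhammer_natDegree]
      exact Nat.le_sub_one_of_lt (mem_range.mp hi)
    · intro n
      have hGN := shift_eq_sum_fwdDiff_iter (1 : ℕ) γ n 0
      simp only [zero_add, smul_eq_mul, mul_one] at hGN
      -- γ n = ∑ k in range (n+1), n.choose k • Δ^[k] γ 0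
      rw [eval_finset_sum]
      have key : ∀ N, n + 1 ≤ N → m ≤ N →
          (∑ i ∈ range m, (C ((Δ_[1])^[i] γ 0 / i.factorial) * descPochhammer ℝ i).eval (n:ℝ))
            = γ n := by
        intro N hN1 hN2
        have h1 : (∑ i ∈ range m, (C ((Δ_[1])^[i] γ 0 / i.factorial)
              * descPochhammer ℝ i).eval (n:ℝ))
            = ∑ i ∈ range N, (n.choose i : ℝ) * (Δ_[1])^[i] γ 0 := by
          rw [Finset.sum_subset (range_subset_range.mpr hN2)]
          · refine Finset.sum_congr rfl fun i _ => ?_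
            rw [eval_mul, eval_C, descPochhammer_eval_eq_descFactorial,
              Nat.descFactorial_eq_factorial_mul_choose]
            push_cast
            field_simp
          · intro i _ hi
            rw [hvanish i (by simpa using hi)]
            simp
        have h2 : γ n = ∑ i ∈ range N, (n.choose i : ℝ) * (Δ_[1])^[i] γ 0 := by
          rw [hGN, Finset.sum_subset (range_subset_range.mpr hN1)]
          · simp [nsmul_eq_mul]
          · intro i _ hi
            rw [Nat.choose_eq_zero_of_lt (by simpa using hi)]
            simp
        rw [h1, ← h2]
      simpa using key (max (n+1) m) (le_max_left _ _) (le_max_right _ _)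

lemma fwdDiff_iter_eq_my_sum (m : ℕ) (γ : ℕ → ℝ) (n : ℕ) :
    (Δ_[1])^[m] γ n = ∑ j ∈ range (m+1), ((-1:ℝ)^j * (m.choose j : ℝ)) * γ (n + (m - j)) := by
  rw [fwdDiff_iter_eq_sum_shift]
  rw [← Finset.sum_range_reflect]
  refine Finset.sum_congr rfl fun j hj => ?_
  have hj' : j ≤ m := by simpa [Nat.lt_succ_iff] using mem_range.mp hj
  have h1 : m + 1 - 1 - j = m - j := by omega
  have h2 : m - (m - j) = j := by omega
  rw [h1, h2, Nat.choose_symm hj']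
  simp only [smul_eq_mul, mul_one, zsmul_eq_mul]
  push_cast
  ring

theorem stmt2
    (X : Type*) [MeasurableSpace X] [Countable X] [Infinite X]
    (hmeas : ∀ s : Set X, MeasurableSet s)
    (φ : X → X)
    (μ : Measure X) [SigmaFinite μ]
    (hμ : ∀ x : X, 0 < μ {x} ∧ μ {x} < ⊤)
    (hns : μ.map φ ≪ μ)
    (C : Lp ℂ 2 μ →L[ℂ] Lp ℂ 2 μ)
    (hC : ∀ f : Lp ℂ 2 μ, (C f : X → ℂ) =ᵐ[μ] fun x => f (φ x))
    (m k : ℕ) (hm : 1 ≤ m) :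
    IsQuasiIso k m C ↔
      ∀ x : X, IsPolySeq (m - 1) (fun n => hRN μ φ (n + k) x) := by
  classical
  haveI : MeasurableSingletonClass X := ⟨fun x => hmeas _⟩
  -- a.e. equality is everywhere equality
  have haee : ∀ {g h : X → ℂ}, g =ᵐ[μ] h → ∀ x, g x = h x := by
    intro g h hgh x
    by_contra hx
    have h0 : μ {y | ¬ g y = h y} = 0 := ae_iff.mp hgh
    have h1 : μ {x} ≤ μ {y | ¬ g y = h y} :=
      measure_mono (by intro z hz; rw [Set.mem_singleton_iff] at hz; subst hz; exact hx)
    exact absurd (le_antisymm (h1.trans h0.le) zero_le) (hμ x).1.ne'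
  -- pointwise formula for C^p
  have hCpow : ∀ (p : ℕ) (f : Lp ℂ 2 μ) (x : X), ((C ^ p) f : X → ℂ) x = f (φ^[p] x) := by
    intro p
    induction p with
    | zero => intro f x; rw [pow_zero]; rfl
    | succ p IH =>
      intro f x
      rw [pow_succ, ContinuousLinearMap.mul_apply, IH (C f) x, haee (hC f) (φ^[p] x),
        Function.iterate_succ_apply']
  -- norm squared as lintegral
  have hnorm : ∀ g : Lp ℂ 2 μ,
      ‖g‖ ^ 2 = (∫⁻ x, (‖(g : X → ℂ) x‖₊ : ℝ≥0∞) ^ 2 ∂μ).toReal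
      ∧ (∫⁻ x, (‖(g : X → ℂ) x‖₊ : ℝ≥0∞) ^ 2 ∂μ) ≠ ∞ := by
    intro g
    have h1 : eLpNorm g 2 μ
        = (∫⁻ x, (‖(g : X → ℂ) x‖₊ : ℝ≥0∞) ^ (2:ℝ≥0∞).toReal ∂μ) ^ (1 / (2:ℝ≥0∞).toReal) :=
      eLpNorm_eq_lintegral_rpow_enorm_toReal (by norm_num) (by norm_num)
    have h2 : ∀ x, (‖(g : X → ℂ) x‖₊ : ℝ≥0∞) ^ (2:ℝ≥0∞).toReal
        = (‖(g : X → ℂ) x‖₊ : ℝ≥0∞) ^ (2:ℕ) := by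
      intro x
      rw [← ENNReal.rpow_natCast]
      norm_num
    rw [lintegral_congr h2] at h1
    have h3 : eLpNorm g 2 μ ^ (2:ℕ) = ∫⁻ x, (‖(g : X → ℂ) x‖₊ : ℝ≥0∞) ^ 2 ∂μ := by
      rw [h1, ← ENNReal.rpow_natCast ((∫⁻ x, (‖(g : X → ℂ) x‖₊ : ℝ≥0∞) ^ 2 ∂μ) ^ (1 / (2:ℝ≥0∞).toReal)) 2,
        ← ENNReal.rpow_mul]
      norm_num
    constructor
    · rw [Lp.norm_def, ← ENNReal.toReal_pow, h3]
    · rw [← h3]; exact ENNReal.pow_ne_top (Lp.eLpNorm_ne_top g)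
  -- change of variables
  have hmap : ∀ (p : ℕ) (f : Lp ℂ 2 μ),
      (∫⁻ x, (‖(f : X → ℂ) (φ^[p] x)‖₊ : ℝ≥0∞) ^ 2 ∂μ)
        = ∑' y, (‖(f : X → ℂ) y‖₊ : ℝ≥0∞) ^ 2 * μ (φ^[p] ⁻¹' {y}) := by
    intro p f
    rw [← lintegral_map (f := fun y => (‖(f : X → ℂ) y‖₊ : ℝ≥0∞) ^ 2)
        (fun s _ => hmeas _) (fun s _ => hmeas _), lintegral_countable']
    exact tsum_congr fun y => by rw [Measure.map_apply (fun s _ => hmeas _) (hmeas _)]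
  -- key norm formula
  have hkey : ∀ (p : ℕ) (f : Lp ℂ 2 μ),
      ‖(C ^ p) f‖ ^ 2 = (∑' y, (‖(f : X → ℂ) y‖₊ : ℝ≥0∞) ^ 2 * μ (φ^[p] ⁻¹' {y})).toReal
      ∧ (∑' y, (‖(f : X → ℂ) y‖₊ : ℝ≥0∞) ^ 2 * μ (φ^[p] ⁻¹' {y})) ≠ ∞ := by
    intro p f
    have h := hnorm ((C ^ p) f)
    have hint : (∫⁻ x, (‖((C ^ p) f : X → ℂ) x‖₊ : ℝ≥0∞) ^ 2 ∂μ)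
        = ∫⁻ x, (‖(f : X → ℂ) (φ^[p] x)‖₊ : ℝ≥0∞) ^ 2 ∂μ :=
      lintegral_congr fun x => by rw [hCpow p f x]
    rw [hint, hmap p f] at h
    exact h
  -- indicator elements
  set e : X → Lp ℂ 2 μ := fun y => indicatorConstLp 2 (hmeas {y}) (hμ y).2.ne (1:ℂ) with he
  have hey : ∀ y z, (e y : X → ℂ) z = if z = y then 1 else 0 := by
    intro y z
    rw [haee indicatorConstLp_coeFn z]
    simp [Set.indicator_apply]
  have heval : ∀ y z, ((‖(e y : X → ℂ) z‖₊ : ℝ≥0∞)) ^ 2 = if z = y then 1 else 0 := by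
    intro y z; rw [hey]; split <;> simp
  have hts : ∀ (p : ℕ) (y : X),
      (∑' z, (‖(e y : X → ℂ) z‖₊ : ℝ≥0∞) ^ 2 * μ (φ^[p] ⁻¹' {z})) = μ (φ^[p] ⁻¹' {y}) := by
    intro p y
    rw [tsum_eq_single y]
    · rw [heval]; simp
    · intro z hz; rw [heval]; simp [hz]
  have hE : ∀ (p : ℕ) (y : X), ‖(C ^ p) (e y)‖ ^ 2 = (μ (φ^[p] ⁻¹' {y})).toReal := by
    intro p y
    rw [(hkey p (e y)).1, hts]
  have hfin : ∀ (p : ℕ) (y : X), μ (φ^[p] ⁻¹' {y}) ≠ ∞ := by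
    intro p y
    have := (hkey p (e y)).2
    rwa [hts] at this
  -- operator reformulation
  have hadj : ∀ p : ℕ, (ContinuousLinearMap.adjoint C) ^ p = ContinuousLinearMap.adjoint (C ^ p) := by
    intro p
    rw [← ContinuousLinearMap.star_eq_adjoint, ← ContinuousLinearMap.star_eq_adjoint, star_pow]
  have hinner : ∀ f : Lp ℂ 2 μ,
      (inner ℂ (((ContinuousLinearMap.adjoint C) ^ k * BmOp m C * C ^ k) f) f : ℂ)
        = ((∑ j ∈ range (m+1), ((-1:ℝ)^j * (m.choose j : ℝ)) * ‖(C ^ (m - j + k)) f‖ ^ 2 : ℝ) : ℂ) := by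
    intro f
    rw [ContinuousLinearMap.mul_apply, ContinuousLinearMap.mul_apply, hadj k,
      ContinuousLinearMap.adjoint_inner_left, BmOp, ContinuousLinearMap.sum_apply, sum_inner]
    have hterm : ∀ j ∈ range (m+1),
        (inner ℂ (((((-1 : ℂ) ^ j * (m.choose j : ℂ)) •
            ((ContinuousLinearMap.adjoint C) ^ (m - j) * C ^ (m - j))) ((C ^ k) f)) ) ((C ^ k) f) : ℂ)
          = (((-1:ℝ)^j * (m.choose j : ℝ) * ‖(C ^ (m - j + k)) f‖ ^ 2 : ℝ) : ℂ) := by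
      intro j _
      rw [ContinuousLinearMap.smul_apply, inner_smul_left, ContinuousLinearMap.mul_apply,
        hadj (m - j), ContinuousLinearMap.adjoint_inner_left, ← ContinuousLinearMap.mul_apply,
        ← pow_add, inner_self_eq_norm_sq_to_K]
      simp only [map_mul, map_pow, map_neg, map_one, Complex.conj_natCast, Complex.ofReal_mul,
        Complex.ofReal_pow, Complex.ofReal_neg, Complex.ofReal_one, Complex.ofReal_natCast]
      ring_nf
      rfl
    rw [Finset.sum_congr rfl hterm]
    push_cast
    ring
  have hiff : IsQuasiIso k m C ↔ ∀ f : Lp ℂ 2 μ,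
      ∑ j ∈ range (m+1), ((-1:ℝ)^j * (m.choose j : ℝ)) * ‖(C ^ (m - j + k)) f‖ ^ 2 = 0 := by
    rw [IsQuasiIso]
    constructor
    · intro h f
      have h2 := hinner f
      rw [h] at h2
      have h3 : ((∑ j ∈ range (m+1), ((-1:ℝ)^j * (m.choose j : ℝ)) * ‖(C ^ (m - j + k)) f‖ ^ 2 : ℝ) : ℂ) = 0 := by
        rw [← h2]; simp
      exact_mod_cast h3
    · intro h
      have h2 := (inner_map_self_eq_zero
        (((ContinuousLinearMap.adjoint C) ^ k * BmOp m C * C ^ k : Lp ℂ 2 μ →L[ℂ] Lp ℂ 2 μ) :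
          Lp ℂ 2 μ →ₗ[ℂ] Lp ℂ 2 μ)).mp ?_
      · exact ContinuousLinearMap.coe_injective (by rw [h2]; rfl)
      · intro v
        rw [ContinuousLinearMap.coe_coe, hinner v, h v, Complex.ofReal_zero]
  have hμx : ∀ x : X, (μ {x}).toReal ≠ 0 := fun x =>
    (ENNReal.toReal_pos (hμ x).1.ne' (hμ x).2.ne).ne'
  rw [hiff]
  constructor
  · intro h x
    rw [isPolySeq_iff_fwdDiff m hm]
    intro n
    rw [fwdDiff_iter_eq_my_sum]
    have h1 := h ((C ^ n) (e x))
    have h2 : ∀ j ∈ range (m+1), ((-1:ℝ)^j * (m.choose j : ℝ)) * ‖(C ^ (m - j + k)) ((C ^ n) (e x))‖ ^ 2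
        = ((-1:ℝ)^j * (m.choose j : ℝ)) * (μ (φ^[(n + (m - j)) + k] ⁻¹' {x})).toReal := by
      intro j _
      rw [← ContinuousLinearMap.mul_apply, ← pow_add,
        show m - j + k + n = n + (m - j) + k from by omega, hE]
    rw [Finset.sum_congr rfl h2] at h1
    have h3 : ∀ j ∈ range (m+1),
        ((-1:ℝ)^j * (m.choose j : ℝ)) * ((fun n => hRN μ φ (n + k) x) (n + (m - j)))
          = (((-1:ℝ)^j * (m.choose j : ℝ)) * (μ (φ^[(n + (m - j)) + k] ⁻¹' {x})).toReal) / (μ {x}).toReal := by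
      intro j _
      simp only [hRN]
      ring
    rw [Finset.sum_congr rfl h3, ← Finset.sum_div, h1, zero_div]
  · intro h f
    have hD : ∀ y : X,
        ∑ j ∈ range (m+1), ((-1:ℝ)^j * (m.choose j : ℝ)) * (μ (φ^[m - j + k] ⁻¹' {y})).toReal = 0 := by
      intro y
      have h0 := (isPolySeq_iff_fwdDiff m hm _).mp (h y) 0
      rw [fwdDiff_iter_eq_my_sum] at h0
      have h1 : ∀ j ∈ range (m+1), ((-1:ℝ)^j * (m.choose j : ℝ)) * (μ (φ^[m - j + k] ⁻¹' {y})).toReal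
          = (((-1:ℝ)^j * (m.choose j : ℝ)) * ((fun n => hRN μ φ (n + k) y) (0 + (m - j)))) * (μ {y}).toReal := by
        intro j _
        simp only [hRN]
        have hμe : (0 + (m - j)) + k = m - j + k := by omega
        rw [hμe]
        field_simp [hμx y]
      rw [Finset.sum_congr rfl h1, ← Finset.sum_mul, h0, zero_mul]
    have hsummand : ∀ j ∈ range (m+1),
        Summable (fun y => (((‖(f : X → ℂ) y‖₊ : ℝ≥0∞) ^ 2) * μ (φ^[m - j + k] ⁻¹' {y})).toReal) :=
      fun j _ => ENNReal.summable_toReal (hkey _ f).2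
    have hterm : ∀ j ∈ range (m+1), ((-1:ℝ)^j * (m.choose j : ℝ)) * ‖(C ^ (m - j + k)) f‖ ^ 2
        = ∑' y, ((-1:ℝ)^j * (m.choose j : ℝ))
            * (((‖(f : X → ℂ) y‖₊ : ℝ≥0∞) ^ 2) * μ (φ^[m - j + k] ⁻¹' {y})).toReal := by
      intro j _
      rw [(hkey (m - j + k) f).1,
        ENNReal.tsum_toReal_eq (fun y =>
          ENNReal.mul_ne_top (ENNReal.pow_ne_top ENNReal.coe_ne_top) (hfin _ y)),
        tsum_mul_left]
    rw [Finset.sum_congr rfl hterm,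
      ← Summable.tsum_finsetSum (fun j hj => Summable.mul_left _ (hsummand j hj))]
    have hpt : ∀ y : X, ∑ j ∈ range (m+1), ((-1:ℝ)^j * (m.choose j : ℝ))
        * (((‖(f : X → ℂ) y‖₊ : ℝ≥0∞) ^ 2) * μ (φ^[m - j + k] ⁻¹' {y})).toReal = 0 := by
      intro y
      have h5 : ∀ j ∈ range (m+1), ((-1:ℝ)^j * (m.choose j : ℝ))
          * (((‖(f : X → ℂ) y‖₊ : ℝ≥0∞) ^ 2) * μ (φ^[m - j + k] ⁻¹' {y})).toReal
          = ((‖(f : X → ℂ) y‖₊ : ℝ≥0∞) ^ 2).toReal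
            * (((-1:ℝ)^j * (m.choose j : ℝ)) * (μ (φ^[m - j + k] ⁻¹' {y})).toReal) := by
        intro j _
        rw [ENNReal.toReal_mul]
        ring
      rw [Finset.sum_congr rfl h5, ← Finset.mul_sum, hD y, mul_zero]
    exact (tsum_congr hpt).trans tsum_zero
end
end

section
/- Let m ≥ 1 and k ≥ 0 be integers and assume ∑_{r=1}^{κ} ∑_{i=1}^{η_r} ∑_{j=1}^{m+k} μ({x^r_{i,j}}) < ∞. Then ∑_{r=1}^{κ} μ({x_r}) ∑_{p=0}^{m} (−1)^p binom(m,p) h_{p+k}(x_r) = −∑_{r=1}^{κ} ∑_{i=1}^{η_r} ∑_{p=0}^{m−1} (−1)^p binom(m−1,p) μ({x^r_{i,p+k+1}}) = −∑_{r=1}^{κ} ∑_{i=1}^{η_r} ∑_{p=0}^{m−1} (−1)^p binom(m−1,p) μ({x^r_{i,1}}) h_{p+k}(x^r_{i,1}). -/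
open MeasureTheory Finset

noncomputable section

/-- Sum of a real family over the branch indices `i ∈ J_{η r} = {i : 1 ≤ i ≤ η r}`
(a `tsum`, since `η r` may be `∞`). -/
def bsumR (η : ℕ → ℕ∞) (r : ℕ) (f : ℕ → ℝ) : ℝ :=
  ∑' i : ℕ, Set.indicator {i : ℕ | 1 ≤ i ∧ (i : ℕ∞) ≤ η r} f i

/-- Sum of an `ℝ≥0∞`-valued family over the branch indices `i ∈ J_{η r}`. -/
def bsumE (η : ℕ → ℕ∞) (r : ℕ) (f : ℕ → ENNReal) : ENNReal :=
  ∑' i : ℕ, Set.indicator {i : ℕ | 1 ≤ i ∧ (i : ℕ∞) ≤ η r} f i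

private lemma comb_aux (g : ℕ → ℝ) (n k : ℕ) :
    ∑ p ∈ range (n + 2), (-1:ℝ)^p * ((n+1).choose p : ℝ) * g (p + k) =
    -∑ p ∈ range (n + 1), (-1:ℝ)^p * (n.choose p : ℝ) * (g (p + k + 1) - g (p + k)) := by
  set h : ℕ → ℝ := fun p => (-1:ℝ)^p * (n.choose p : ℝ) * g (p + k) with hh
  have hU : ∑ p ∈ range (n + 1), (-1:ℝ)^p * (n.choose (p+1) : ℝ) * g (p + k + 1)
      = g k - ∑ p ∈ range (n + 1), h p := by
    have h1 : ∑ p ∈ range (n + 1), (-1:ℝ)^p * (n.choose (p+1) : ℝ) * g (p + k + 1)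
        = -∑ p ∈ range (n + 1), h (p+1) := by
      rw [← Finset.sum_neg_distrib]
      refine Finset.sum_congr rfl fun p _ => ?_
      simp only [hh]
      have : p + 1 + k = p + k + 1 := by omega
      rw [this]; ring_nf
    have h2 : ∑ p ∈ range (n + 2), h p = (∑ p ∈ range (n + 1), h (p+1)) + h 0 :=
      Finset.sum_range_succ' h (n+1)
    have h3 : ∑ p ∈ range (n + 2), h p = (∑ p ∈ range (n + 1), h p) + h (n+1) :=
      Finset.sum_range_succ h (n+1)
    have h4 : h (n+1) = 0 := by simp [hh, Nat.choose_succ_self]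
    have h5 : h 0 = g k := by simp [hh]
    have := h2.symm.trans h3
    rw [h4, h5] at *
    linarith [h1]
  have hsplit : ∑ p ∈ range (n + 2), (-1:ℝ)^p * ((n+1).choose p : ℝ) * g (p + k)
      = (∑ p ∈ range (n + 1),
          ((-1:ℝ)^(p+1) * ((n+1).choose (p+1) : ℝ) * g ((p+1) + k))) + g k :=
    (Finset.sum_range_succ' _ (n+1)).trans (by norm_num)
  have hpascal : ∀ p, ((n+1).choose (p+1) : ℝ) = (n.choose p : ℝ) + (n.choose (p+1) : ℝ) := by
    intro p; rw [Nat.choose_succ_succ]; push_cast; ring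
  rw [hsplit]
  have : ∑ p ∈ range (n + 1), ((-1:ℝ)^(p+1) * ((n+1).choose (p+1) : ℝ) * g ((p+1) + k))
      = -∑ p ∈ range (n + 1), (-1:ℝ)^p * (n.choose p : ℝ) * g (p + k + 1)
        - ∑ p ∈ range (n + 1), (-1:ℝ)^p * (n.choose (p+1) : ℝ) * g (p + k + 1) := by
    rw [← Finset.sum_neg_distrib, ← Finset.sum_sub_distrib]
    refine Finset.sum_congr rfl fun p _ => ?_
    rw [hpascal p]
    have : p + 1 + k = p + k + 1 := by omega
    rw [this]; ring
  rw [this, hU]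
  have hexp : ∑ p ∈ range (n + 1), (-1:ℝ)^p * (n.choose p : ℝ) * (g (p + k + 1) - g (p + k))
      = (∑ p ∈ range (n + 1), (-1:ℝ)^p * (n.choose p : ℝ) * g (p + k + 1))
        - ∑ p ∈ range (n + 1), h p := by
    rw [← Finset.sum_sub_distrib]
    exact Finset.sum_congr rfl fun p _ => by simp only [hh]; ring
  rw [hexp]; ring

theorem stmt5
    (κ : ℕ) (hκ : 1 ≤ κ)
    (Φ₂ : ℤ → ℕ)
    (hΦ₂ : ∀ q : ℤ, (1 ≤ Φ₂ q ∧ Φ₂ q ≤ κ) ∧ (κ : ℤ) ∣ q - (Φ₂ q : ℤ))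
    (X : Type*) [MeasurableSpace X] [Countable X]
    (hmeas : ∀ s : Set X, MeasurableSet s)
    (η : ℕ → ℕ∞)
    (hη : ∃ r : ℕ, 1 ≤ r ∧ r ≤ κ ∧ η r ≠ 0)
    (xc : ℕ → X) (xb : ℕ → ℕ → ℕ → X)
    (hinj₁ : ∀ r r' : ℕ, 1 ≤ r → r ≤ κ → 1 ≤ r' → r' ≤ κ → xc r = xc r' → r = r')
    (hinj₂ : ∀ r r' i j : ℕ, 1 ≤ r → r ≤ κ → 1 ≤ r' → r' ≤ κ → 1 ≤ i → (i : ℕ∞) ≤ η r' →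
      1 ≤ j → xc r ≠ xb r' i j)
    (hinj₃ : ∀ r i j r' i' j' : ℕ, 1 ≤ r → r ≤ κ → 1 ≤ i → (i : ℕ∞) ≤ η r → 1 ≤ j →
      1 ≤ r' → r' ≤ κ → 1 ≤ i' → (i' : ℕ∞) ≤ η r' → 1 ≤ j' →
      xb r i j = xb r' i' j' → r = r' ∧ i = i' ∧ j = j')
    (hsurj : ∀ x : X, (∃ r : ℕ, 1 ≤ r ∧ r ≤ κ ∧ x = xc r) ∨
      ∃ r i j : ℕ, 1 ≤ r ∧ r ≤ κ ∧ 1 ≤ i ∧ (i : ℕ∞) ≤ η r ∧ 1 ≤ j ∧ x = xb r i j)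
    (φ : X → X)
    (hφ₁ : ∀ r i j : ℕ, 1 ≤ r → r ≤ κ → 1 ≤ i → (i : ℕ∞) ≤ η r → 1 ≤ j →
      φ (xb r i (j + 1)) = xb r i j)
    (hφ₂ : ∀ r i : ℕ, 1 ≤ r → r ≤ κ → 1 ≤ i → (i : ℕ∞) ≤ η r → φ (xb r i 1) = xc r)
    (hφ₃ : ∀ r : ℕ, 1 ≤ r → r ≤ κ → φ (xc (Φ₂ ((r : ℤ) + 1))) = xc r)
    (μ : Measure X) [SigmaFinite μ]
    (hμ : ∀ x : X, 0 < μ {x} ∧ μ {x} < ⊤)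
    (m k : ℕ) (hm : 1 ≤ m)
    (hfin : ∑ r ∈ Finset.Icc 1 κ,
        bsumE η r (fun i => ∑ j ∈ Finset.Icc 1 (m + k), μ {xb r i j}) < ⊤) :
    (∑ r ∈ Finset.Icc 1 κ, (μ {xc r}).toReal *
        ∑ p ∈ Finset.range (m + 1),
          (-1 : ℝ) ^ p * (m.choose p : ℝ) * hRN μ φ (p + k) (xc r) =
      -∑ r ∈ Finset.Icc 1 κ, bsumR η r (fun i =>
        ∑ p ∈ Finset.range m,
          (-1 : ℝ) ^ p * ((m - 1).choose p : ℝ) * (μ {xb r i (p + k + 1)}).toReal)) ∧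
    (-∑ r ∈ Finset.Icc 1 κ, bsumR η r (fun i =>
        ∑ p ∈ Finset.range m,
          (-1 : ℝ) ^ p * ((m - 1).choose p : ℝ) * (μ {xb r i (p + k + 1)}).toReal) =
      -∑ r ∈ Finset.Icc 1 κ, bsumR η r (fun i =>
        ∑ p ∈ Finset.range m,
          (-1 : ℝ) ^ p * ((m - 1).choose p : ℝ) * (μ {xb r i 1}).toReal *
            hRN μ φ (p + k) (xb r i 1))) := by
    classical
  obtain ⟨n, rfl⟩ : ∃ n, m = n + 1 := ⟨m - 1, by omega⟩
  simp only [Nat.add_sub_cancel]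
  have Φmem : ∀ q : ℤ, 1 ≤ Φ₂ q ∧ Φ₂ q ≤ κ := fun q => (hΦ₂ q).1
  have Φuniq : ∀ (q : ℤ) (a : ℕ), 1 ≤ a → a ≤ κ → (κ : ℤ) ∣ q - a → Φ₂ q = a := by
    intro q a h1 h2 hd
    have hd0 := (hΦ₂ q).2
    have hd2 : (κ : ℤ) ∣ (Φ₂ q : ℤ) - a := by
      have h3 : (Φ₂ q : ℤ) - a = (q - a) - (q - Φ₂ q) := by ring
      rw [h3]; exact dvd_sub hd hd0
    have hb := Φmem q
    have h0 : (Φ₂ q : ℤ) - a = 0 := by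
      refine Int.eq_zero_of_abs_lt_dvd hd2 ?_
      rw [abs_lt]
      omega
    omega
  have Φcong : ∀ a b : ℤ, (κ : ℤ) ∣ a - b → Φ₂ a = Φ₂ b := by
    intro a b hd
    refine Φuniq a (Φ₂ b) (Φmem b).1 (Φmem b).2 ?_
    have h3 : a - (Φ₂ b : ℤ) = (a - b) + (b - Φ₂ b) := by ring
    rw [h3]; exact dvd_add hd (hΦ₂ b).2
  have Φfix : ∀ r : ℕ, 1 ≤ r → r ≤ κ → Φ₂ r = r := fun r h1 h2 => Φuniq r r h1 h2 (by simp)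
  have φc : ∀ s : ℕ, 1 ≤ s → s ≤ κ → φ (xc s) = xc (Φ₂ ((s : ℤ) - 1)) := by
    intro s h1 h2
    have hr := Φmem ((s : ℤ) - 1)
    have hkey : Φ₂ ((Φ₂ ((s : ℤ) - 1) : ℤ) + 1) = s := by
      apply Φuniq _ s h1 h2
      obtain ⟨c, hc⟩ := (hΦ₂ ((s : ℤ) - 1)).2
      exact ⟨-c, by linear_combination -hc⟩
    have h := hφ₃ (Φ₂ ((s : ℤ) - 1)) hr.1 hr.2
    rw [hkey] at h
    exact h
  have fib_b : ∀ (r i j : ℕ), 1 ≤ r → r ≤ κ → 1 ≤ i → (i : ℕ∞) ≤ η r → 1 ≤ j →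
      φ ⁻¹' {xb r i j} = {xb r i (j + 1)} := by
    intro r i j hr1 hr2 hi1 hi2 hj
    ext z
    simp only [Set.mem_preimage, Set.mem_singleton_iff]
    constructor
    · intro hz
      rcases hsurj z with ⟨s, hs1, hs2, rfl⟩ | ⟨r', i', j', h1, h2, h3, h4, h5, rfl⟩
      · rw [φc s hs1 hs2] at hz
        exact absurd hz (hinj₂ _ _ _ _ (Φmem _).1 (Φmem _).2 hr1 hr2 hi1 hi2 hj)
      · rcases Nat.lt_or_ge j' 2 with h | h
        · have hj1 : j' = 1 := by omega
          subst hj1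
          rw [hφ₂ r' i' h1 h2 h3 h4] at hz
          exact absurd hz (hinj₂ _ _ _ _ h1 h2 hr1 hr2 hi1 hi2 hj)
        · obtain ⟨j'', rfl⟩ : ∃ j'', j' = j'' + 1 := ⟨j' - 1, by omega⟩
          have hj'' : 1 ≤ j'' := by omega
          rw [hφ₁ r' i' j'' h1 h2 h3 h4 hj''] at hz
          obtain ⟨rfl, rfl, rfl⟩ :=
            hinj₃ _ _ _ _ _ _ h1 h2 h3 h4 hj'' hr1 hr2 hi1 hi2 hj hz
          rfl
    · rintro rfl
      exact hφ₁ r i j hr1 hr2 hi1 hi2 hj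
  have iter_b : ∀ (q r i j : ℕ), 1 ≤ r → r ≤ κ → 1 ≤ i → (i : ℕ∞) ≤ η r → 1 ≤ j →
      (φ^[q]) ⁻¹' {xb r i j} = {xb r i (j + q)} := by
    intro q
    induction q with
    | zero => intro r i j _ _ _ _ _; simp
    | succ q ih =>
      intro r i j hr1 hr2 hi1 hi2 hj
      rw [Function.iterate_succ', Set.preimage_comp, fib_b r i j hr1 hr2 hi1 hi2 hj,
        ih r i (j + 1) hr1 hr2 hi1 hi2 (by omega)]
      rw [show j + 1 + q = j + (q + 1) by omega]
  have fib_c : ∀ r : ℕ, 1 ≤ r → r ≤ κ →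
      φ ⁻¹' {xc r} = {xc (Φ₂ ((r : ℤ) + 1))} ∪
        ⋃ i : ℕ, (if 1 ≤ i ∧ (i : ℕ∞) ≤ η r then ({xb r i 1} : Set X) else ∅) := by
    intro r hr1 hr2
    ext z
    simp only [Set.mem_preimage, Set.mem_singleton_iff, Set.mem_union, Set.mem_iUnion]
    constructor
    · intro hz
      rcases hsurj z with ⟨s, hs1, hs2, rfl⟩ | ⟨r', i', j', h1, h2, h3, h4, h5, rfl⟩
      · left
        rw [φc s hs1 hs2] at hz
        have heq : Φ₂ ((s : ℤ) - 1) = r := hinj₁ _ _ (Φmem _).1 (Φmem _).2 hr1 hr2 hz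
        have hs : Φ₂ ((r : ℤ) + 1) = s := by
          apply Φuniq _ s hs1 hs2
          obtain ⟨c, hc⟩ := (hΦ₂ ((s : ℤ) - 1)).2
          rw [heq] at hc
          exact ⟨-c, by linear_combination -hc⟩
        rw [hs]
      · rcases Nat.lt_or_ge j' 2 with h | h
        · have hj1 : j' = 1 := by omega
          subst hj1
          rw [hφ₂ r' i' h1 h2 h3 h4] at hz
          have hrr : r' = r := hinj₁ _ _ h1 h2 hr1 hr2 hz
          subst hrr
          right
          exact ⟨i', by rw [if_pos ⟨h3, h4⟩]; rfl⟩
        · obtain ⟨j'', rfl⟩ : ∃ j'', j' = j'' + 1 := ⟨j' - 1, by omega⟩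
          have hj'' : 1 ≤ j'' := by omega
          rw [hφ₁ r' i' j'' h1 h2 h3 h4 hj''] at hz
          exact absurd hz.symm (hinj₂ _ _ _ _ hr1 hr2 h1 h2 h3 h4 hj'')
    · rintro (rfl | ⟨i, hi⟩)
      · exact hφ₃ r hr1 hr2
      · by_cases h : 1 ≤ i ∧ (i : ℕ∞) ≤ η r
        · rw [if_pos h] at hi
          rw [hi]
          exact hφ₂ r i hr1 hr2 h.1 h.2
        · rw [if_neg h] at hi
          exact absurd hi (Set.notMem_empty z)
  have hUnion : ∀ (r j : ℕ), 1 ≤ r → r ≤ κ → 1 ≤ j →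
      μ (⋃ i : ℕ, (if 1 ≤ i ∧ (i : ℕ∞) ≤ η r then ({xb r i j} : Set X) else ∅))
        = bsumE η r (fun i => μ {xb r i j}) := by
    intro r j hr1 hr2 hj
    have hpair : Pairwise (Function.onFun Disjoint
        (fun i : ℕ => if 1 ≤ i ∧ (i : ℕ∞) ≤ η r then ({xb r i j} : Set X) else ∅)) := by
      intro i i' hne
      dsimp only [Function.onFun]
      by_cases h : 1 ≤ i ∧ (i : ℕ∞) ≤ η r
      · by_cases h' : 1 ≤ i' ∧ (i' : ℕ∞) ≤ η r
        · rw [if_pos h, if_pos h', Set.disjoint_singleton]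
          intro heq
          exact hne (hinj₃ _ _ _ _ _ _ hr1 hr2 h.1 h.2 hj hr1 hr2 h'.1 h'.2 hj heq).2.1
        · rw [if_neg h']; simp
      · rw [if_neg h]; simp
    rw [measure_iUnion hpair (fun i => hmeas _)]
    unfold bsumE
    refine tsum_congr fun i => ?_
    by_cases h : 1 ≤ i ∧ (i : ℕ∞) ≤ η r
    · rw [if_pos h,
        Set.indicator_of_mem (show i ∈ {i : ℕ | 1 ≤ i ∧ (i : ℕ∞) ≤ η r} from h)]
    · rw [if_neg h,
        Set.indicator_of_notMem (show i ∉ {i : ℕ | 1 ≤ i ∧ (i : ℕ∞) ≤ η r} from h),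
        measure_empty]
  have Pform : ∀ (q r : ℕ), 1 ≤ r → r ≤ κ →
      μ ((φ^[q]) ⁻¹' {xc r}) = μ {xc (Φ₂ ((r : ℤ) + q))}
        + ∑ j ∈ Icc 1 q,
            bsumE η (Φ₂ ((r : ℤ) + q - j)) (fun i => μ {xb (Φ₂ ((r : ℤ) + q - j)) i j}) := by
    intro q
    induction q with
    | zero =>
      intro r hr1 hr2
      simp [Φfix r hr1 hr2]
    | succ q ih =>
      intro r hr1 hr2
      rw [Function.iterate_succ', Set.preimage_comp, fib_c r hr1 hr2, Set.preimage_union]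
      have hr1mem := Φmem ((r : ℤ) + 1)
      have hpre2 : (φ^[q]) ⁻¹'
            (⋃ i : ℕ, (if 1 ≤ i ∧ (i : ℕ∞) ≤ η r then ({xb r i 1} : Set X) else ∅))
          = ⋃ i : ℕ, (if 1 ≤ i ∧ (i : ℕ∞) ≤ η r then ({xb r i (1 + q)} : Set X) else ∅) := by
        rw [Set.preimage_iUnion]
        refine Set.iUnion_congr fun i => ?_
        by_cases h : 1 ≤ i ∧ (i : ℕ∞) ≤ η r
        · rw [if_pos h, if_pos h, iter_b q r i 1 hr1 hr2 h.1 h.2 le_rfl]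
        · rw [if_neg h, if_neg h]; exact Set.preimage_empty
      have hdisj0 : Disjoint ({xc (Φ₂ ((r : ℤ) + 1))} : Set X)
          (⋃ i : ℕ, (if 1 ≤ i ∧ (i : ℕ∞) ≤ η r then ({xb r i 1} : Set X) else ∅)) := by
        rw [Set.disjoint_left]
        rintro a rfl ha
        simp only [Set.mem_iUnion] at ha
        obtain ⟨i, hi⟩ := ha
        by_cases h : 1 ≤ i ∧ (i : ℕ∞) ≤ η r
        · rw [if_pos h] at hi
          exact hinj₂ _ _ _ _ hr1mem.1 hr1mem.2 hr1 hr2 h.1 h.2 le_rfl hi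
        · rw [if_neg h] at hi
          exact absurd hi (Set.notMem_empty _)
      rw [hpre2, measure_union (by rw [← hpre2]; exact hdisj0.preimage _) (hmeas _)]
      rw [ih (Φ₂ ((r : ℤ) + 1)) hr1mem.1 hr1mem.2, hUnion r (1 + q) hr1 hr2 (by omega)]
      have hdq := (hΦ₂ ((r : ℤ) + 1)).2
      have hc1 : Φ₂ ((Φ₂ ((r : ℤ) + 1) : ℤ) + (q : ℤ)) = Φ₂ ((r : ℤ) + ((q + 1 : ℕ) : ℤ)) := by
        apply Φcong
        obtain ⟨c, hc⟩ := hdq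
        exact ⟨-c, by push_cast; linear_combination -hc⟩
      have hc2 : ∀ j : ℕ, Φ₂ ((Φ₂ ((r : ℤ) + 1) : ℤ) + (q : ℤ) - (j : ℤ))
          = Φ₂ ((r : ℤ) + ((q + 1 : ℕ) : ℤ) - (j : ℤ)) := by
        intro j
        apply Φcong
        obtain ⟨c, hc⟩ := hdq
        exact ⟨-c, by push_cast; linear_combination -hc⟩
      have hlast : Φ₂ ((r : ℤ) + ((q + 1 : ℕ) : ℤ) - ((q + 1 : ℕ) : ℤ)) = r := by
        have harg : ((r : ℤ) + ((q + 1 : ℕ) : ℤ) - ((q + 1 : ℕ) : ℤ)) = (r : ℤ) := by ring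
        rw [harg]; exact Φfix r hr1 hr2
      rw [Finset.sum_Icc_succ_top (by omega : 1 ≤ q + 1)]
      simp only [hc1, hc2, hlast, show 1 + q = q + 1 from Nat.add_comm 1 q]
      rw [add_assoc]
  have reindex : ∀ (c : ℤ) (F : ℕ → ENNReal),
      ∑ r ∈ Icc 1 κ, F (Φ₂ ((r : ℤ) + c)) = ∑ r ∈ Icc 1 κ, F r := by
    intro c F
    refine Finset.sum_nbij' (i := fun r : ℕ => Φ₂ ((r : ℤ) + c))
      (j := fun r : ℕ => Φ₂ ((r : ℤ) - c)) ?_ ?_ ?_ ?_ ?_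
    · intro a _; exact mem_Icc.mpr ⟨(Φmem _).1, (Φmem _).2⟩
    · intro a _; exact mem_Icc.mpr ⟨(Φmem _).1, (Φmem _).2⟩
    · intro a ha
      obtain ⟨h1, h2⟩ := mem_Icc.mp ha
      apply Φuniq _ _ h1 h2
      obtain ⟨e, he⟩ := (hΦ₂ ((a : ℤ) + c)).2
      exact ⟨-e, by linear_combination -he⟩
    · intro a ha
      obtain ⟨h1, h2⟩ := mem_Icc.mp ha
      apply Φuniq _ _ h1 h2
      obtain ⟨e, he⟩ := (hΦ₂ ((a : ℤ) - c)).2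
      exact ⟨-e, by linear_combination -he⟩
    · intro a _; rfl
  have SUMq : ∀ q : ℕ, ∑ r ∈ Icc 1 κ, μ ((φ^[q]) ⁻¹' {xc r})
      = (∑ r ∈ Icc 1 κ, μ {xc r})
        + ∑ j ∈ Icc 1 q, ∑ r ∈ Icc 1 κ, bsumE η r (fun i => μ {xb r i j}) := by
    intro q
    rw [Finset.sum_congr rfl fun r hr => Pform q r (mem_Icc.mp hr).1 (mem_Icc.mp hr).2]
    rw [Finset.sum_add_distrib]
    congr 1
    · exact reindex (q : ℤ) (fun s => μ {xc s})
    · rw [Finset.sum_comm]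
      refine Finset.sum_congr rfl fun j _ => ?_
      have harg : ∀ r : ℕ, ((r : ℤ) + (q : ℤ) - (j : ℤ)) = ((r : ℤ) + ((q : ℤ) - (j : ℤ))) :=
        fun r => by ring
      simp_rw [harg]
      exact reindex ((q : ℤ) - (j : ℤ)) (fun s => bsumE η s (fun i => μ {xb s i j}))
  have hBfin : ∀ j, 1 ≤ j → j ≤ n + 1 + k →
      (∑ r ∈ Icc 1 κ, bsumE η r (fun i => μ {xb r i j})) ≠ ⊤ := by
    intro j h1 h2
    refine ne_top_of_le_ne_top hfin.ne (Finset.sum_le_sum fun r _ => ?_)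
    unfold bsumE
    refine ENNReal.tsum_le_tsum fun i => ?_
    by_cases h : i ∈ {i : ℕ | 1 ≤ i ∧ (i : ℕ∞) ≤ η r}
    · rw [Set.indicator_of_mem h, Set.indicator_of_mem h]
      exact Finset.single_le_sum (f := fun j' => μ {xb r i j'})
        (fun _ _ => zero_le) (mem_Icc.mpr ⟨h1, h2⟩)
    · rw [Set.indicator_of_notMem h, Set.indicator_of_notMem h]
  have hbfin : ∀ r j, r ∈ Icc 1 κ → 1 ≤ j → j ≤ n + 1 + k →
      bsumE η r (fun i => μ {xb r i j}) ≠ ⊤ := by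
    intro r j hr h1 h2
    exact ne_top_of_le_ne_top (hBfin j h1 h2)
      (Finset.single_le_sum (f := fun r' => bsumE η r' (fun i => μ {xb r' i j}))
        (fun _ _ => zero_le) hr)
  have hCfin : (∑ r ∈ Icc 1 κ, μ {xc r}) ≠ ⊤ :=
    (ENNReal.sum_lt_top.mpr fun r _ => (hμ _).2).ne
  have hg : ∀ q, q ≤ n + 1 + k →
      ∑ r ∈ Icc 1 κ, (μ {xc r}).toReal * hRN μ φ q (xc r)
        = (∑ r ∈ Icc 1 κ, μ {xc r}).toReal
          + ∑ j ∈ Icc 1 q, (∑ r ∈ Icc 1 κ, bsumE η r (fun i => μ {xb r i j})).toReal := by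
    intro q hq
    have hSfin : (∑ j ∈ Icc 1 q, ∑ r ∈ Icc 1 κ, bsumE η r (fun i => μ {xb r i j})) ≠ ⊤ := by
      refine (ENNReal.sum_lt_top.mpr fun j hj => ?_).ne
      obtain ⟨hj1, hj2⟩ := mem_Icc.mp hj
      exact (hBfin j hj1 (by omega)).lt_top
    have hfin' : ∀ r ∈ Icc 1 κ, μ ((φ^[q]) ⁻¹' {xc r}) ≠ ⊤ := by
      intro r hr
      have hle := Finset.single_le_sum (f := fun r' => μ ((φ^[q]) ⁻¹' {xc r'}))
        (fun _ _ => zero_le) hr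
      refine ne_top_of_le_ne_top ?_ hle
      rw [SUMq q]
      exact ENNReal.add_ne_top.mpr ⟨hCfin, hSfin⟩
    have hpt : ∀ r ∈ Icc 1 κ,
        (μ {xc r}).toReal * hRN μ φ q (xc r) = (μ ((φ^[q]) ⁻¹' {xc r})).toReal := by
      intro r _
      unfold hRN
      rw [mul_comm, div_mul_cancel₀]
      exact (ENNReal.toReal_pos (hμ _).1.ne' (hμ _).2.ne).ne'
    rw [Finset.sum_congr rfl hpt, ← ENNReal.toReal_sum hfin', SUMq q,
      ENNReal.toReal_add hCfin hSfin, ENNReal.toReal_sum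
        (fun j hj => hBfin j (mem_Icc.mp hj).1
          (by have := (mem_Icc.mp hj).2; omega))]
  have hbridge : ∀ r ∈ Icc 1 κ, ∀ j, 1 ≤ j → j ≤ n + 1 + k →
      bsumR η r (fun i => (μ {xb r i j}).toReal)
        = (bsumE η r (fun i => μ {xb r i j})).toReal := by
    intro r hr j h1 h2
    unfold bsumR bsumE
    rw [ENNReal.tsum_toReal_eq]
    · refine tsum_congr fun i => ?_
      by_cases h : i ∈ {i : ℕ | 1 ≤ i ∧ (i : ℕ∞) ≤ η r}
      · rw [Set.indicator_of_mem h, Set.indicator_of_mem h]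
      · rw [Set.indicator_of_notMem h, Set.indicator_of_notMem h]; simp
    · intro i
      by_cases h : i ∈ {i : ℕ | 1 ≤ i ∧ (i : ℕ∞) ≤ η r}
      · rw [Set.indicator_of_mem h]; exact (hμ _).2.ne
      · rw [Set.indicator_of_notMem h]; exact ENNReal.zero_ne_top
  have hsummable : ∀ r ∈ Icc 1 κ, ∀ j, 1 ≤ j → j ≤ n + 1 + k →
      Summable (fun i => Set.indicator {i : ℕ | 1 ≤ i ∧ (i : ℕ∞) ≤ η r}
        (fun i => (μ {xb r i j}).toReal) i) := by
    intro r hr j h1 h2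
    have heq : (fun i => Set.indicator {i : ℕ | 1 ≤ i ∧ (i : ℕ∞) ≤ η r}
        (fun i => (μ {xb r i j}).toReal) i)
        = fun i => (Set.indicator {i : ℕ | 1 ≤ i ∧ (i : ℕ∞) ≤ η r}
          (fun i => μ {xb r i j}) i).toReal := by
      funext i
      by_cases h : i ∈ {i : ℕ | 1 ≤ i ∧ (i : ℕ∞) ≤ η r}
      · rw [Set.indicator_of_mem h, Set.indicator_of_mem h]
      · rw [Set.indicator_of_notMem h, Set.indicator_of_notMem h]; simp
    rw [heq]
    exact ENNReal.summable_toReal (hbfin r j hr h1 h2)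
  have hLHS : ∑ r ∈ Icc 1 κ, (μ {xc r}).toReal *
        ∑ p ∈ range (n + 1 + 1), (-1 : ℝ) ^ p * ((n + 1).choose p : ℝ)
          * hRN μ φ (p + k) (xc r)
      = -∑ p ∈ range (n + 1), (-1 : ℝ) ^ p * (n.choose p : ℝ)
          * (∑ r ∈ Icc 1 κ, bsumE η r (fun i => μ {xb r i (p + k + 1)})).toReal := by
    calc ∑ r ∈ Icc 1 κ, (μ {xc r}).toReal *
          ∑ p ∈ range (n + 1 + 1), (-1 : ℝ) ^ p * ((n + 1).choose p : ℝ)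
            * hRN μ φ (p + k) (xc r)
        = ∑ p ∈ range (n + 2), (-1 : ℝ) ^ p * ((n + 1).choose p : ℝ) *
            ∑ r ∈ Icc 1 κ, (μ {xc r}).toReal * hRN μ φ (p + k) (xc r) := by
          have h1 : ∀ r ∈ Icc 1 κ, (μ {xc r}).toReal *
              ∑ p ∈ range (n + 1 + 1), (-1 : ℝ) ^ p * ((n + 1).choose p : ℝ)
                * hRN μ φ (p + k) (xc r)
              = ∑ p ∈ range (n + 2), (-1 : ℝ) ^ p * ((n + 1).choose p : ℝ) *
                  ((μ {xc r}).toReal * hRN μ φ (p + k) (xc r)) := by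
            intro r _
            rw [Finset.mul_sum]
            exact Finset.sum_congr rfl fun p _ => by ring
          rw [Finset.sum_congr rfl h1, Finset.sum_comm]
          exact Finset.sum_congr rfl fun p _ => (Finset.mul_sum _ _ _).symm
      _ = ∑ p ∈ range (n + 2), (-1 : ℝ) ^ p * ((n + 1).choose p : ℝ) *
            ((∑ r ∈ Icc 1 κ, μ {xc r}).toReal + ∑ j ∈ Icc 1 (p + k),
              (∑ r ∈ Icc 1 κ, bsumE η r (fun i => μ {xb r i j})).toReal) := by
          refine Finset.sum_congr rfl fun p hp => ?_
          rw [hg (p + k) (by have := mem_range.mp hp; omega)]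
      _ = -∑ p ∈ range (n + 1), (-1 : ℝ) ^ p * (n.choose p : ℝ) *
            (((∑ r ∈ Icc 1 κ, μ {xc r}).toReal + ∑ j ∈ Icc 1 (p + k + 1),
              (∑ r ∈ Icc 1 κ, bsumE η r (fun i => μ {xb r i j})).toReal)
            - ((∑ r ∈ Icc 1 κ, μ {xc r}).toReal + ∑ j ∈ Icc 1 (p + k),
              (∑ r ∈ Icc 1 κ, bsumE η r (fun i => μ {xb r i j})).toReal)) :=
          comb_aux (fun q => (∑ r ∈ Icc 1 κ, μ {xc r}).toReal + ∑ j ∈ Icc 1 q,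
            (∑ r ∈ Icc 1 κ, bsumE η r (fun i => μ {xb r i j})).toReal) n k
      _ = -∑ p ∈ range (n + 1), (-1 : ℝ) ^ p * (n.choose p : ℝ)
            * (∑ r ∈ Icc 1 κ, bsumE η r (fun i => μ {xb r i (p + k + 1)})).toReal := by
          congr 1
          refine Finset.sum_congr rfl fun p _ => ?_
          rw [Finset.sum_Icc_succ_top (by omega : 1 ≤ p + k + 1)]
          ring
  have hRHS : ∑ r ∈ Icc 1 κ, bsumR η r (fun i =>
        ∑ p ∈ range (n + 1), (-1 : ℝ) ^ p * (n.choose p : ℝ) * (μ {xb r i (p + k + 1)}).toReal)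
      = ∑ p ∈ range (n + 1), (-1 : ℝ) ^ p * (n.choose p : ℝ)
          * (∑ r ∈ Icc 1 κ, bsumE η r (fun i => μ {xb r i (p + k + 1)})).toReal := by
    have per_r : ∀ r ∈ Icc 1 κ, bsumR η r (fun i => ∑ p ∈ range (n + 1),
          (-1 : ℝ) ^ p * (n.choose p : ℝ) * (μ {xb r i (p + k + 1)}).toReal)
        = ∑ p ∈ range (n + 1), (-1 : ℝ) ^ p * (n.choose p : ℝ)
            * bsumR η r (fun i => (μ {xb r i (p + k + 1)}).toReal) := by
      intro r hr
      unfold bsumR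
      have hind : ∀ i, Set.indicator {i : ℕ | 1 ≤ i ∧ (i : ℕ∞) ≤ η r}
          (fun i => ∑ p ∈ range (n + 1),
            (-1 : ℝ) ^ p * (n.choose p : ℝ) * (μ {xb r i (p + k + 1)}).toReal) i
          = ∑ p ∈ range (n + 1), (-1 : ℝ) ^ p * (n.choose p : ℝ) *
              Set.indicator {i : ℕ | 1 ≤ i ∧ (i : ℕ∞) ≤ η r}
                (fun i => (μ {xb r i (p + k + 1)}).toReal) i := by
        intro i
        by_cases h : i ∈ {i : ℕ | 1 ≤ i ∧ (i : ℕ∞) ≤ η r}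
        · rw [Set.indicator_of_mem h]
          refine Finset.sum_congr rfl fun p _ => ?_
          rw [Set.indicator_of_mem h]
        · rw [Set.indicator_of_notMem h]
          symm
          refine Finset.sum_eq_zero fun p _ => ?_
          rw [Set.indicator_of_notMem h, mul_zero]
      rw [tsum_congr hind]
      rw [Summable.tsum_finsetSum (fun p hp => Summable.mul_left _
        (hsummable r hr (p + k + 1) (by omega) (by have := mem_range.mp hp; omega)))]
      refine Finset.sum_congr rfl fun p _ => ?_
      exact tsum_mul_left
    rw [Finset.sum_congr rfl per_r, Finset.sum_comm]
    refine Finset.sum_congr rfl fun p hp => ?_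
    rw [← Finset.mul_sum]
    congr 1
    rw [ENNReal.toReal_sum (fun r hr => hbfin r (p + k + 1) hr (by omega)
      (by have := mem_range.mp hp; omega))]
    exact Finset.sum_congr rfl fun r hr => hbridge r hr (p + k + 1) (by omega)
      (by have := mem_range.mp hp; omega)
  have key3 : ∀ r ∈ Icc 1 κ, bsumR η r (fun i =>
        ∑ p ∈ range (n + 1), (-1 : ℝ) ^ p * (n.choose p : ℝ) * (μ {xb r i (p + k + 1)}).toReal)
      = bsumR η r (fun i => ∑ p ∈ range (n + 1),
          (-1 : ℝ) ^ p * (n.choose p : ℝ) * (μ {xb r i 1}).toReal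
            * hRN μ φ (p + k) (xb r i 1)) := by
    intro r hr
    obtain ⟨hr1, hr2⟩ := mem_Icc.mp hr
    unfold bsumR
    refine tsum_congr fun i => ?_
    by_cases h : i ∈ {i : ℕ | 1 ≤ i ∧ (i : ℕ∞) ≤ η r}
    · rw [Set.indicator_of_mem h, Set.indicator_of_mem h]
      refine Finset.sum_congr rfl fun p _ => ?_
      have ha : (μ {xb r i 1}).toReal ≠ 0 :=
        (ENNReal.toReal_pos (hμ _).1.ne' (hμ _).2.ne).ne'
      unfold hRN
      rw [iter_b (p + k) r i 1 hr1 hr2 h.1 h.2 le_rfl,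
        show 1 + (p + k) = p + k + 1 from by omega]
      have hcancel : (μ {xb r i 1}).toReal *
          ((μ {xb r i (p + k + 1)}).toReal / (μ {xb r i 1}).toReal)
          = (μ {xb r i (p + k + 1)}).toReal := by
        rw [mul_comm]; exact div_mul_cancel₀ _ ha
      rw [mul_assoc ((-1 : ℝ) ^ p * (n.choose p : ℝ)), hcancel]
    · rw [Set.indicator_of_notMem h, Set.indicator_of_notMem h]
  refine ⟨?_, ?_⟩
  · rw [hLHS, hRHS]
  · congr 1
    exact Finset.sum_congr rfl key3
end
end
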